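/- Let n ≥ 1, M ≥ 2 and let u : Q_1 → ℝ be continuous such that for every fixed t the map x ↦ u(x,t) is differentiable with ∂_{x_n} u ≥ 1 − 1/M everywhere on Q_1, and u(0,0) = 0. Then there exist δ > 0 and a unique function v defined on D := {(x', z, t) ∈ ℝ^{n−1} × ℝ × ℝ : |x'| + |z| + |t|^{1/2} < δ} such that for every (x', z, t) ∈ D one has ((x', v(x',z,t)), t) ∈ Q_1 and u((x', v(x',z,t)), t) = z; moreover v is continuous on D. -/

import Mathlib

open MeasureTheory Metric Set Filter

noncomputable section

abbrev Spc (n : ℕ) := EuclideanSpace ℝ (Fin n)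

/-- Parabolic cylinder `Q_r(x,t)`. -/
def Qcyl (n : ℕ) (r : ℝ) (x : Spc n) (t : ℝ) : Set (Spc n × ℝ) :=
  {p : Spc n × ℝ | ‖p.1 - x‖ + Real.sqrt |p.2 - t| < r}

/-- Time derivative `∂ₜ u`. -/
def timeDeriv {n : ℕ} (u : Spc n × ℝ → ℝ) (p : Spc n × ℝ) : ℝ :=
  deriv (fun s => u (p.1, s)) p.2

/-- Spatial gradient `∇u`. -/
def spGrad {n : ℕ} (u : Spc n × ℝ → ℝ) (p : Spc n × ℝ) : Spc n :=
  gradient (fun y => u (y, p.2)) p.1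

/-- The point `p` translated by `h` in the `i`-th spatial direction. -/
def dirPoint {n : ℕ} (p : Spc n × ℝ) (i : Fin n) (h : ℝ) : Spc n × ℝ :=
  (p.1 + h • EuclideanSpace.single i (1 : ℝ), p.2)

/-- Second spatial partial `∂ᵢⱼ u`, as derivative of the `i`-th component of
the spatial gradient in direction `j`. -/
def secondPartial {n : ℕ} (u : Spc n × ℝ → ℝ) (i j : Fin n) (p : Spc n × ℝ) : ℝ :=
  deriv (fun h : ℝ => spGrad u (dirPoint p j h) i) 0

/-- Spatial Laplacian `Δu`. -/
def lapl {n : ℕ} (u : Spc n × ℝ → ℝ) (p : Spc n × ℝ) : ℝ :=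
  ∑ i, secondPartial u i i p

/-- `u` is a strong solution of `∂ₜ u - Δu = g · χ_{u>0}` on `U`:
continuous with continuous spatial gradient, and a.e. on `U` the time derivative and
the pure second spatial partials exist and the equation holds. -/
def IsStrongSolution {n : ℕ} (u : Spc n × ℝ → ℝ) (g : ℝ) (U : Set (Spc n × ℝ)) : Prop :=
  ContinuousOn u U ∧
  (∀ p ∈ U, HasGradientAt (fun y => u (y, p.2)) (spGrad u p) p.1) ∧
  ContinuousOn (fun p => spGrad u p) U ∧
  (∀ᵐ p ∂(volume.restrict U),
    HasDerivAt (fun s => u (p.1, s)) (timeDeriv u p) p.2 ∧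
    (∀ i : Fin n, HasDerivAt (fun h : ℝ => spGrad u (dirPoint p i h) i) (secondPartial u i i p) 0) ∧
    timeDeriv u p - lapl u p = (if 0 < u p then g else 0))

/-- The free boundary `Γ = ∂{u>0}` relative to the open set `U`. -/
def freeBdry {n : ℕ} (u : Spc n × ℝ → ℝ) (U : Set (Spc n × ℝ)) : Set (Spc n × ℝ) :=
  U ∩ frontier {p : Spc n × ℝ | 0 < u p}

/-- Assemble a point of `ℝⁿ` from `x' ∈ ℝ^{n-1}` (the first `n-1` coordinates) and a last
coordinate `z`. -/
def assemble (n : ℕ) (x' : EuclideanSpace ℝ (Fin (n - 1))) (z : ℝ) : Spc n :=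
  (WithLp.equiv 2 (∀ _ : Fin n, ℝ)).symm
    (fun i => if h : (i : ℕ) < n - 1 then x' ⟨(i : ℕ), h⟩ else z)

variable {m : ℕ}

lemma assemble_apply (x' : EuclideanSpace ℝ (Fin m)) (z : ℝ) (i : Fin (m+1)) :
    assemble (m+1) x' z i = if h : (i : ℕ) < m then x' ⟨(i : ℕ), h⟩ else z := rfl

lemma assemble_eq_line (x' : EuclideanSpace ℝ (Fin m)) (z : ℝ) :
    assemble (m+1) x' z
      = assemble (m+1) x' 0 + z • EuclideanSpace.single (Fin.last m) (1:ℝ) := by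
  ext i
  rw [PiLp.add_apply, PiLp.smul_apply, assemble_apply, assemble_apply,
    EuclideanSpace.single_apply]
  by_cases h : (i : ℕ) < m
  · have : i ≠ Fin.last m := by
      intro hh; rw [hh] at h; simp [Fin.last] at h
    simp [h, this]
  · have : i = Fin.last m := by
      apply Fin.ext; simp [Fin.last]; omega
    simp [h, this]

lemma assemble_norm_le (x' : EuclideanSpace ℝ (Fin m)) (z : ℝ) :
    ‖assemble (m+1) x' z‖ ≤ ‖x'‖ + |z| := by
  have h1 : ‖assemble (m+1) x' z‖ = Real.sqrt (∑ i : Fin m, ‖x' i‖^2 + z^2) := by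
    rw [EuclideanSpace.norm_eq, Fin.sum_univ_castSucc]
    congr 1
    congr 1
    · apply Finset.sum_congr rfl
      intro i _
      rw [assemble_apply]
      have h : ((i.castSucc : Fin (m+1)) : ℕ) < m := i.isLt
      rw [dif_pos h]
      have : (⟨((i.castSucc : Fin (m+1)) : ℕ), h⟩ : Fin m) = i := Fin.ext (by simp)
      rw [this]
    · rw [assemble_apply]
      have : ¬ ((Fin.last m : Fin (m+1)) : ℕ) < m := by simp [Fin.last]
      rw [dif_neg this]
      rw [Real.norm_eq_abs, sq_abs]
  rw [h1]
  have h2 : (∑ i : Fin m, ‖x' i‖^2) = ‖x'‖^2 := by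
    rw [EuclideanSpace.norm_eq, Real.sq_sqrt]
    positivity
  rw [h2]
  have h3 : ‖x'‖^2 + z^2 ≤ (‖x'‖ + |z|)^2 := by
    have : 0 ≤ ‖x'‖ * |z| := by positivity
    nlinarith [sq_abs z]
  calc Real.sqrt (‖x'‖^2 + z^2) ≤ Real.sqrt ((‖x'‖ + |z|)^2) := Real.sqrt_le_sqrt h3
    _ = ‖x'‖ + |z| := Real.sqrt_sq (by positivity)

lemma abs_le_assemble_norm (x' : EuclideanSpace ℝ (Fin m)) (z : ℝ) :
    |z| ≤ ‖assemble (m+1) x' z‖ := by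
  have h : z = assemble (m+1) x' z (Fin.last m) := by
    rw [assemble_apply]
    simp [Fin.last]
  have h2 : |z| = Real.sqrt (‖assemble (m+1) x' z (Fin.last m)‖^2) := by
    rw [← h, Real.norm_eq_abs, sq_abs, Real.sqrt_sq_eq_abs]
  rw [EuclideanSpace.norm_eq, h2]
  apply Real.sqrt_le_sqrt
  exact Finset.single_le_sum (f := fun i : Fin (m+1) => ‖assemble (m+1) x' z i‖^2) (fun i _ => by positivity) (Finset.mem_univ _)

def assembleL (m : ℕ) : (EuclideanSpace ℝ (Fin m) × ℝ) →ₗ[ℝ] Spc (m+1) where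
  toFun q := assemble (m+1) q.1 q.2
  map_add' x y := by
    ext i
    simp only [assemble_apply, Prod.fst_add, Prod.snd_add, PiLp.add_apply]
    split_ifs with h <;> simp [PiLp.add_apply]
  map_smul' c x := by
    ext i
    simp only [assemble_apply, Prod.smul_fst, Prod.smul_snd, PiLp.smul_apply, RingHom.id_apply]
    split_ifs with h <;> simp [PiLp.smul_apply]

lemma assemble_continuous :
    Continuous (fun q : EuclideanSpace ℝ (Fin m) × ℝ => assemble (m+1) q.1 q.2) :=
  (assembleL m).continuous_of_finiteDimensional

/-- slice derivative -/
lemma slice_hasDerivAt (u : Spc (m+1) × ℝ → ℝ)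
    (hdiff : ∀ p ∈ Qcyl (m+1) 1 0 0, HasGradientAt (fun y => u (y, p.2)) (spGrad u p) p.1)
    (x' : EuclideanSpace ℝ (Fin m)) (t s : ℝ)
    (hs : (assemble (m+1) x' s, t) ∈ Qcyl (m+1) 1 0 0) :
    HasDerivAt (fun r => u (assemble (m+1) x' r, t))
      (spGrad u (assemble (m+1) x' s, t) (Fin.last m)) s := by
  have hg := hdiff _ hs
  set E : Spc (m+1) := EuclideanSpace.single (Fin.last m) (1:ℝ) with hE
  have hline : HasDerivAt (fun r : ℝ => assemble (m+1) x' 0 + r • E) E s := by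
    simpa using ((hasDerivAt_id s).smul_const E).const_add (assemble (m+1) x' 0)
  have hF := hg.hasFDerivAt
  rw [show ((assemble (m+1) x' s, t) : Spc (m+1) × ℝ).1 = assemble (m+1) x' 0 + s • E from assemble_eq_line x' s] at hF
  have hcomp := hF.comp_hasDerivAt s hline
  have heq : (fun r => u (assemble (m+1) x' r, t))
      = fun r => ((fun y => u (y, ((assemble (m+1) x' s, t) : Spc (m+1) × ℝ).2)) ∘ (fun r : ℝ => assemble (m+1) x' 0 + r • E)) r := by
    funext r
    simp only [Function.comp]
    rw [← assemble_eq_line x' r]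
  rw [heq]
  convert hcomp using 1
  · rfl
  · rfl
  rw [InnerProductSpace.toDual_apply_apply, real_inner_comm, hE, EuclideanSpace.inner_single_left]
  simp

lemma mem_Q_iff {n : ℕ} (y : Spc n) (t : ℝ) :
    (y, t) ∈ Qcyl n 1 0 0 ↔ ‖y‖ + Real.sqrt |t| < 1 := by
  simp [Qcyl]

lemma slice_convex (x' : EuclideanSpace ℝ (Fin m)) (t : ℝ) :
    Convex ℝ {s : ℝ | ‖assemble (m+1) x' s‖ + Real.sqrt |t| < 1} := by
  intro s1 h1 s2 h2 a b ha hb hab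
  simp only [mem_setOf_eq, smul_eq_mul] at h1 h2 ⊢
  have key : assemble (m+1) x' (a * s1 + b * s2)
      = a • assemble (m+1) x' s1 + b • assemble (m+1) x' s2 := by
    have h3 : (x', a * s1 + b * s2) = a • ((x', s1) : EuclideanSpace ℝ (Fin m) × ℝ)
        + b • ((x', s2) : EuclideanSpace ℝ (Fin m) × ℝ) := by
      rw [Prod.smul_mk, Prod.smul_mk, Prod.mk_add_mk, smul_eq_mul, smul_eq_mul,
        ← add_smul, hab, one_smul]
    show assembleL m (x', a * s1 + b * s2) = _
    rw [h3, map_add, _root_.map_smul, _root_.map_smul]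
    rfl
  have hnorm : ‖assemble (m+1) x' (a * s1 + b * s2)‖
      ≤ a * ‖assemble (m+1) x' s1‖ + b * ‖assemble (m+1) x' s2‖ := by
    rw [key]
    calc ‖a • assemble (m+1) x' s1 + b • assemble (m+1) x' s2‖
        ≤ ‖a • assemble (m+1) x' s1‖ + ‖b • assemble (m+1) x' s2‖ := norm_add_le _ _
      _ = a * ‖assemble (m+1) x' s1‖ + b * ‖assemble (m+1) x' s2‖ := by
          rw [norm_smul, norm_smul, Real.norm_eq_abs, Real.norm_eq_abs,
            abs_of_nonneg ha, abs_of_nonneg hb]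
  rcases eq_or_lt_of_le ha with ha0 | ha0
  · have hb1 : b = 1 := by linarith
    subst hb1
    rw [← ha0] at hnorm ⊢
    simp only [zero_mul, zero_add, one_mul] at hnorm ⊢
    linarith
  · nlinarith [Real.sqrt_nonneg |t|, norm_nonneg (assemble (m+1) x' s1),
      norm_nonneg (assemble (m+1) x' s2)]

lemma slice_strictMono (u : Spc (m+1) × ℝ → ℝ)
    (hdiff : ∀ p ∈ Qcyl (m+1) 1 0 0, HasGradientAt (fun y => u (y, p.2)) (spGrad u p) p.1)
    (hlast : ∀ p ∈ Qcyl (m+1) 1 0 0, (1/2 : ℝ) ≤ spGrad u p (Fin.last m))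
    (x' : EuclideanSpace ℝ (Fin m)) (t : ℝ) :
    StrictMonoOn (fun s => u (assemble (m+1) x' s, t))
      {s : ℝ | ‖assemble (m+1) x' s‖ + Real.sqrt |t| < 1} := by
  set S := {s : ℝ | ‖assemble (m+1) x' s‖ + Real.sqrt |t| < 1} with hS
  have hmem : ∀ s ∈ S, (assemble (m+1) x' s, t) ∈ Qcyl (m+1) 1 0 0 := by
    intro s hs; rw [mem_Q_iff]; exact hs
  apply strictMonoOn_of_deriv_pos (slice_convex x' t)
  · intro s hs
    exact (slice_hasDerivAt u hdiff x' t s (hmem s hs)).differentiableAt.continuousAt.continuousWithinAt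
  · intro s hs
    have hs' : s ∈ S := interior_subset hs
    rw [(slice_hasDerivAt u hdiff x' t s (hmem s hs')).deriv]
    have := hlast _ (hmem s hs')
    linarith

lemma slice_growth (u : Spc (m+1) × ℝ → ℝ)
    (hdiff : ∀ p ∈ Qcyl (m+1) 1 0 0, HasGradientAt (fun y => u (y, p.2)) (spGrad u p) p.1)
    (hlast : ∀ p ∈ Qcyl (m+1) 1 0 0, (1/2 : ℝ) ≤ spGrad u p (Fin.last m))
    (x' : EuclideanSpace ℝ (Fin m)) (t : ℝ) (h : ‖x'‖ + Real.sqrt |t| < 1/4) :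
    ∀ x ∈ Icc (-(1/2):ℝ) (1/2), ∀ y ∈ Icc (-(1/2):ℝ) (1/2), x ≤ y →
      (1/2) * (y - x) ≤ u (assemble (m+1) x' y, t) - u (assemble (m+1) x' x, t) := by
  have hsub : ∀ s ∈ Icc (-(1/2):ℝ) (1/2), (assemble (m+1) x' s, t) ∈ Qcyl (m+1) 1 0 0 := by
    intro s hs
    rw [mem_Q_iff]
    have h1 := assemble_norm_le x' s
    have h2 : |s| ≤ 1/2 := abs_le.2 ⟨by linarith [hs.1], hs.2⟩
    linarith
  have hcont : ContinuousOn (fun s => u (assemble (m+1) x' s, t)) (Icc (-(1/2):ℝ) (1/2)) :=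
    fun s hs => (slice_hasDerivAt u hdiff x' t s (hsub s hs)).differentiableAt.continuousAt.continuousWithinAt
  have hdiffOn : DifferentiableOn ℝ (fun s => u (assemble (m+1) x' s, t))
      (interior (Icc (-(1/2):ℝ) (1/2))) := by
    intro s hs
    exact (slice_hasDerivAt u hdiff x' t s (hsub s (interior_subset hs))).differentiableAt.differentiableWithinAt
  exact (convex_Icc _ _).mul_sub_le_image_sub_of_le_deriv hcont hdiffOn
    (fun s hs => by
      rw [(slice_hasDerivAt u hdiff x' t s (hsub s (interior_subset hs))).deriv]
      exact hlast _ (hsub s (interior_subset hs)))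

/-- existence, uniqueness and continuity of the hodograph transform `v` in the
`xₙ`-variable of a continuous function with `∂ₙu ≥ 1 - 1/M` and `u(0,0) = 0`. -/
theorem stmt10 (n : ℕ) (hn : 1 ≤ n) (M : ℝ) (hM : 2 ≤ M)
    (u : Spc n × ℝ → ℝ) (hcont : ContinuousOn u (Qcyl n 1 0 0))
    (hdiff : ∀ p ∈ Qcyl n 1 0 0, HasGradientAt (fun y => u (y, p.2)) (spGrad u p) p.1)
    (hlast : ∀ p ∈ Qcyl n 1 0 0, 1 - 1 / M ≤ spGrad u p ⟨n - 1, by omega⟩)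
    (h0 : u (0, 0) = 0) :
    ∃ δ > 0, ∃ v : EuclideanSpace ℝ (Fin (n - 1)) × ℝ × ℝ → ℝ,
      (∀ q : EuclideanSpace ℝ (Fin (n - 1)) × ℝ × ℝ,
        ‖q.1‖ + |q.2.1| + Real.sqrt |q.2.2| < δ →
        (assemble n q.1 (v q), q.2.2) ∈ Qcyl n 1 0 0 ∧
        u (assemble n q.1 (v q), q.2.2) = q.2.1) ∧
      ContinuousOn v {q : EuclideanSpace ℝ (Fin (n - 1)) × ℝ × ℝ |
        ‖q.1‖ + |q.2.1| + Real.sqrt |q.2.2| < δ} ∧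
      ∀ w : EuclideanSpace ℝ (Fin (n - 1)) × ℝ × ℝ → ℝ,
        (∀ q : EuclideanSpace ℝ (Fin (n - 1)) × ℝ × ℝ,
          ‖q.1‖ + |q.2.1| + Real.sqrt |q.2.2| < δ →
          (assemble n q.1 (w q), q.2.2) ∈ Qcyl n 1 0 0 ∧
          u (assemble n q.1 (w q), q.2.2) = q.2.1) →
        ∀ q : EuclideanSpace ℝ (Fin (n - 1)) × ℝ × ℝ,
          ‖q.1‖ + |q.2.1| + Real.sqrt |q.2.2| < δ → w q = v q := by
  obtain ⟨m, rfl⟩ : ∃ m, n = m + 1 := ⟨n - 1, by omega⟩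
  have hM0 : (0:ℝ) < M := by linarith
  have hlast' : ∀ p ∈ Qcyl (m+1) 1 0 0, (1/2 : ℝ) ≤ spGrad u p (Fin.last m) := by
    intro p hp
    have h1 := hlast p hp
    have h2 : spGrad u p ⟨m + 1 - 1, by omega⟩ = spGrad u p (Fin.last m) := rfl
    rw [h2] at h1
    have h3 : 1 / M ≤ 1/2 := by
      rw [div_le_div_iff₀ hM0 (by norm_num)]
      linarith
    linarith
  have hQopen : IsOpen (Qcyl (m+1) 1 0 0) := by
    apply isOpen_lt _ continuous_const
    exact ((continuous_fst.sub continuous_const).norm).add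
      (Real.continuous_sqrt.comp ((continuous_snd.sub continuous_const).abs))
  have h00 : ((0, 0) : Spc (m+1) × ℝ) ∈ Qcyl (m+1) 1 0 0 := by
    rw [mem_Q_iff]; simp
  have hcontAt : ContinuousAt u (0, 0) := hcont.continuousAt (hQopen.mem_nhds h00)
  obtain ⟨ρ, hρ0, hρ⟩ : ∃ ρ > 0, ∀ p : Spc (m+1) × ℝ, dist p (0,0) < ρ → |u p| < 1/8 := by
    obtain ⟨ρ, hρ0, hρ⟩ := Metric.continuousAt_iff.1 hcontAt (1/8) (by norm_num)
    have h0' : u 0 = 0 := h0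
    exact ⟨ρ, hρ0, fun p hp => by simpa [Real.dist_eq, h0', h0] using hρ hp⟩
  set δ : ℝ := min ρ (1/8) with hδdef
  have hδ0 : 0 < δ := lt_min hρ0 (by norm_num)
  have hδ8 : δ ≤ 1/8 := min_le_right _ _
  have hδρ : δ ≤ ρ := min_le_left _ _
  -- membership helper
  have hmemQ : ∀ (x' : EuclideanSpace ℝ (Fin m)) (t s : ℝ),
      ‖x'‖ + Real.sqrt |t| < 1/4 → |s| ≤ 3/4 →
      (assemble (m+1) x' s, t) ∈ Qcyl (m+1) 1 0 0 := by
    intro x' t s hsm hs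
    rw [mem_Q_iff]
    have h1 := assemble_norm_le x' s
    linarith
  -- basic facts for q in the domain
  have hDfacts : ∀ q : EuclideanSpace ℝ (Fin m) × ℝ × ℝ,
      ‖q.1‖ + |q.2.1| + Real.sqrt |q.2.2| < δ →
      ‖q.1‖ + Real.sqrt |q.2.2| < 1/4 ∧ |q.2.1| < δ ∧
      |u (assemble (m+1) q.1 0, q.2.2)| < 1/8 := by
    intro q hq
    have hz0 : 0 ≤ |q.2.1| := abs_nonneg _
    have hx0 : 0 ≤ ‖q.1‖ := norm_nonneg _
    have hs0 : 0 ≤ Real.sqrt |q.2.2| := Real.sqrt_nonneg _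
    refine ⟨by linarith, by linarith, ?_⟩
    apply hρ
    rw [Prod.dist_eq]
    apply max_lt
    · rw [dist_zero_right]
      have := assemble_norm_le q.1 0
      simp only [abs_zero, add_zero] at this
      linarith
    · rw [Real.dist_eq, sub_zero]
      have hsq : Real.sqrt |q.2.2| < δ := by linarith
      have h2 : |q.2.2| < δ * δ := by
        nlinarith [Real.sq_sqrt (abs_nonneg q.2.2), Real.sqrt_nonneg |q.2.2|]
      nlinarith
  -- existence
  have exist : ∀ q : EuclideanSpace ℝ (Fin m) × ℝ × ℝ,
      ‖q.1‖ + |q.2.1| + Real.sqrt |q.2.2| < δ →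
      ∃ s, s ∈ Icc (-(1/2):ℝ) (1/2) ∧ u (assemble (m+1) q.1 s, q.2.2) = q.2.1 := by
    intro q hq
    obtain ⟨hsm, hz, hb⟩ := hDfacts q hq
    have hgrow := slice_growth u hdiff hlast' q.1 q.2.2 hsm
    have habs := abs_lt.1 hb
    have hzabs := abs_lt.1 hz
    have hplus : q.2.1 < u (assemble (m+1) q.1 (1/2), q.2.2) := by
      have := hgrow 0 (by norm_num) (1/2) (by norm_num) (by norm_num)
      have h8 : q.2.1 < 1/8 := by linarith
      linarith
    have hminus : u (assemble (m+1) q.1 (-(1/2)), q.2.2) < q.2.1 := by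
      have := hgrow (-(1/2)) (by norm_num) 0 (by norm_num) (by norm_num)
      have h8 : -(1/8) < q.2.1 := by linarith
      linarith
    have hcontf : ContinuousOn (fun s => u (assemble (m+1) q.1 s, q.2.2))
        (Icc (-(1/2):ℝ) (1/2)) := by
      intro s hs
      have hsabs : |s| ≤ 1/2 := abs_le.2 ⟨hs.1, hs.2⟩
      have hsQ := hmemQ q.1 q.2.2 s hsm (le_trans hsabs (by norm_num))
      exact (slice_hasDerivAt u hdiff q.1 q.2.2 s hsQ).differentiableAt.continuousAt.continuousWithinAt
    have hIVT := intermediate_value_Icc (by norm_num : (-(1/2):ℝ) ≤ 1/2) hcontf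
    obtain ⟨s, hs, hfs⟩ := hIVT ⟨le_of_lt hminus, le_of_lt hplus⟩
    exact ⟨s, hs, hfs⟩
  choose! v hv1 hv2 using exist
  have hvQ : ∀ q : EuclideanSpace ℝ (Fin m) × ℝ × ℝ,
      ‖q.1‖ + |q.2.1| + Real.sqrt |q.2.2| < δ →
      (assemble (m+1) q.1 (v q), q.2.2) ∈ Qcyl (m+1) 1 0 0 := by
    intro q hq
    have habs : |v q| ≤ 1/2 := abs_le.2 ⟨(hv1 q hq).1, (hv1 q hq).2⟩
    exact hmemQ q.1 q.2.2 (v q) (hDfacts q hq).1 (le_trans habs (by norm_num))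
  refine ⟨δ, hδ0, v, fun q hq => ⟨hvQ q hq, hv2 q hq⟩, ?_, ?_⟩
  · -- continuity
    rw [Metric.continuousOn_iff]
    intro q₀ hq₀ ε hε
    have hq₀' : ‖q₀.1‖ + |q₀.2.1| + Real.sqrt |q₀.2.2| < δ := hq₀
    set η : ℝ := min (ε/2) (1/8) with hηdef
    have hη0 : 0 < η := lt_min (by linarith) (by norm_num)
    have hη8 : η ≤ 1/8 := min_le_right _ _
    set v₀ := v q₀ with hv₀
    have hv₀I := hv1 q₀ hq₀'
    have hsm₀ := (hDfacts q₀ hq₀').1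
    -- slice memberships at q₀
    have hmemS : ∀ s : ℝ, |s| ≤ 3/4 →
        s ∈ {s : ℝ | ‖assemble (m+1) q₀.1 s‖ + Real.sqrt |q₀.2.2| < 1} := by
      intro s hs
      have h1 : ‖assemble (m+1) q₀.1 s‖ ≤ ‖q₀.1‖ + |s| := assemble_norm_le q₀.1 s
      simp only [mem_setOf_eq]
      linarith
    have habs₀ : |v₀| ≤ 1/2 := abs_le.2 ⟨hv₀I.1, hv₀I.2⟩
    have hpη : |v₀ + η| ≤ 3/4 := by
      rw [abs_le]
      constructor <;> [linarith [abs_le.1 habs₀ |>.1]; linarith [abs_le.1 habs₀ |>.2]]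
    have hmη : |v₀ - η| ≤ 3/4 := by
      rw [abs_le]
      constructor <;> [linarith [abs_le.1 habs₀ |>.1]; linarith [abs_le.1 habs₀ |>.2]]
    have mono₀ := slice_strictMono u hdiff hlast' q₀.1 q₀.2.2
    have hfplus : q₀.2.1 < u (assemble (m+1) q₀.1 (v₀ + η), q₀.2.2) := by
      rw [← hv2 q₀ hq₀']
      exact mono₀ (hmemS v₀ (le_trans habs₀ (by norm_num))) (hmemS _ hpη)
        (by linarith)
    have hfminus : u (assemble (m+1) q₀.1 (v₀ - η), q₀.2.2) < q₀.2.1 := by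
      rw [← hv2 q₀ hq₀']
      exact mono₀ (hmemS _ hmη) (hmemS v₀ (le_trans habs₀ (by norm_num)))
        (by linarith)
    -- continuity of the comparison functions
    have hΦ : ∀ c : ℝ, Continuous
        (fun q : EuclideanSpace ℝ (Fin m) × ℝ × ℝ => ((assemble (m+1) q.1 c, q.2.2) : Spc (m+1) × ℝ)) := by
      intro c
      exact (assemble_continuous.comp (continuous_fst.prodMk continuous_const)).prodMk
        continuous_snd.snd
    have hgc : ∀ c : ℝ, |c| ≤ 3/4 → ContinuousAt
        (fun q : EuclideanSpace ℝ (Fin m) × ℝ × ℝ =>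
          u (assemble (m+1) q.1 c, q.2.2) - q.2.1) q₀ := by
      intro c hc
      have hcQ : (assemble (m+1) q₀.1 c, q₀.2.2) ∈ Qcyl (m+1) 1 0 0 :=
        hmemQ q₀.1 q₀.2.2 c hsm₀ hc
      have h1 : ContinuousAt (u ∘ (fun q : EuclideanSpace ℝ (Fin m) × ℝ × ℝ =>
          ((assemble (m+1) q.1 c, q.2.2) : Spc (m+1) × ℝ))) q₀ :=
        ContinuousAt.comp (x := q₀)
          (f := fun q : EuclideanSpace ℝ (Fin m) × ℝ × ℝ =>
            ((assemble (m+1) q.1 c, q.2.2) : Spc (m+1) × ℝ))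
          (hcont.continuousAt (hQopen.mem_nhds hcQ)) (hΦ c).continuousAt
      exact h1.sub continuous_snd.fst.continuousAt
    have hPP : (fun q : EuclideanSpace ℝ (Fin m) × ℝ × ℝ =>
        u (assemble (m+1) q.1 (v₀ + η), q.2.2) - q.2.1) ⁻¹' (Ioi 0) ∈ nhds q₀ :=
      (hgc (v₀ + η) hpη).preimage_mem_nhds (Ioi_mem_nhds (sub_pos.2 hfplus))
    have hMM : (fun q : EuclideanSpace ℝ (Fin m) × ℝ × ℝ =>
        u (assemble (m+1) q.1 (v₀ - η), q.2.2) - q.2.1) ⁻¹' (Iio 0) ∈ nhds q₀ :=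
      (hgc (v₀ - η) hmη).preimage_mem_nhds (Iio_mem_nhds (sub_neg.2 hfminus))
    obtain ⟨r, hr0, hball⟩ := Metric.mem_nhds_iff.1 (inter_mem hPP hMM)
    refine ⟨r, hr0, ?_⟩
    intro q hqD hqd
    have hqD' : ‖q.1‖ + |q.2.1| + Real.sqrt |q.2.2| < δ := hqD
    have hq' := hball (Metric.mem_ball.2 hqd)
    obtain ⟨hgp, hgm⟩ := hq'
    have hgp' : q.2.1 < u (assemble (m+1) q.1 (v₀ + η), q.2.2) := by
      have : (0:ℝ) < u (assemble (m+1) q.1 (v₀ + η), q.2.2) - q.2.1 := hgp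
      linarith
    have hgm' : u (assemble (m+1) q.1 (v₀ - η), q.2.2) < q.2.1 := by
      have : u (assemble (m+1) q.1 (v₀ - η), q.2.2) - q.2.1 < (0:ℝ) := hgm
      linarith
    have hsmq := (hDfacts q hqD').1
    have hmemSq : ∀ s : ℝ, |s| ≤ 3/4 →
        s ∈ {s : ℝ | ‖assemble (m+1) q.1 s‖ + Real.sqrt |q.2.2| < 1} := by
      intro s hs
      have h1 : ‖assemble (m+1) q.1 s‖ ≤ ‖q.1‖ + |s| := assemble_norm_le q.1 s
      simp only [mem_setOf_eq]
      linarith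
    have hvqI := hv1 q hqD'
    have habsq : |v q| ≤ 1/2 := abs_le.2 ⟨hvqI.1, hvqI.2⟩
    have monoq := slice_strictMono u hdiff hlast' q.1 q.2.2
    have hlt1 : v q < v₀ + η := by
      rw [← (monoq.lt_iff_lt (hmemSq (v q) (le_trans habsq (by norm_num)))
        (hmemSq _ hpη))]
      rw [hv2 q hqD']
      exact hgp'
    have hlt2 : v₀ - η < v q := by
      rw [← (monoq.lt_iff_lt (hmemSq _ hmη)
        (hmemSq (v q) (le_trans habsq (by norm_num))))]
      rw [hv2 q hqD']
      exact hgm'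
    rw [Real.dist_eq]
    have hηε : η ≤ ε/2 := min_le_left _ _
    rw [abs_lt]
    constructor <;> [linarith; linarith]
  · -- uniqueness
    intro w hw q hq
    have hwq := hw q hq
    have h1 : w q ∈ {s : ℝ | ‖assemble (m+1) q.1 s‖ + Real.sqrt |q.2.2| < 1} :=
      (mem_Q_iff _ _).1 hwq.1
    have h2 : v q ∈ {s : ℝ | ‖assemble (m+1) q.1 s‖ + Real.sqrt |q.2.2| < 1} :=
      (mem_Q_iff _ _).1 (hvQ q hq)
    exact (slice_strictMono u hdiff hlast' q.1 q.2.2).injOn h1 h2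
      (by rw [hwq.2, hv2 q hq])

end
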